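/- Let 1 ≤ m ≤ n be integers, ε = (ε_1, …, ε_m) ∈ {±1}^m, and let A be an m×n real SSR(ε) matrix. Then there exists a column vector c ∈ ℝ^m such that the m×(n+1) matrix [c | A], obtained by adjoining c as a new first column to the left border of A, is SSR(ε). -/

import Mathlib

/-- `A` is strictly sign regular of order `p` with sign pattern `ε` (`SSR_p(ε)`):
for every `k ∈ {1, …, p}` (here `k = kk.val + 1` for `kk : Fin p`), every `k × k` minor of `A`
(the determinant of the submatrix on any `k` rows and `k` columns taken in increasing order)
has sign `ε k`, i.e. `ε k` times the minor is strictly positive. -/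
def IsSSRp (p : ℕ) {m n : ℕ} (A : Matrix (Fin m) (Fin n) ℝ) (ε : Fin p → ℝ) : Prop :=
  ∀ (kk : Fin p) (r : Fin (kk.val + 1) → Fin m) (c : Fin (kk.val + 1) → Fin n),
    StrictMono r → StrictMono c → 0 < ε kk * (A.submatrix r c).det

private lemma detColSum {k : ℕ} (N : Matrix (Fin k) (Fin k) ℝ) (p : Fin k)
    {ι : Type} (s : Finset ι) (f : ι → Fin k → ℝ) :
    (N.updateCol p (fun i => ∑ j ∈ s, f j i)).det
      = ∑ j ∈ s, (N.updateCol p (f j)).det := by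
  classical
  induction s using Finset.induction with
  | empty =>
      simp only [Finset.sum_empty]
      exact Matrix.det_eq_zero_of_column_eq_zero p
        (fun i => by simp [Matrix.updateCol_self])
  | @insert a s ha ih =>
      rw [Finset.sum_insert ha]
      have : (fun i => ∑ j ∈ insert a s, f j i)
          = (f a) + (fun i => ∑ j ∈ s, f j i) := by
        funext i; simp [Finset.sum_insert ha]
      rw [this, Matrix.det_updateCol_add, ih]

private lemma strictMono_le_apply {a b : ℕ} {f : Fin a → Fin b} (hf : StrictMono f)
    (s : Fin a) : (s : ℕ) ≤ (f s : ℕ) := by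
  have aux : ∀ u (h : u < a), u ≤ (f ⟨u, h⟩ : ℕ) := by
    intro u
    induction u with
    | zero => intro h; exact Nat.zero_le _
    | succ v ih =>
        intro h
        have h' : v < a := by omega
        have h1 : (f ⟨v, h'⟩ : ℕ) < (f ⟨v + 1, h⟩ : ℕ) :=
          hf (show (⟨v, h'⟩ : Fin a) < ⟨v + 1, h⟩ from by simp [Fin.lt_def])
        have h2 := ih h'
        omega
  exact aux s.val s.isLt

set_option maxHeartbeats 2000000 in
theorem stmt_6 (m n : ℕ) (hm : 1 ≤ m) (hmn : m ≤ n) (ε : Fin m → ℝ)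
    (hε : ∀ i, ε i = 1 ∨ ε i = -1)
    (A : Matrix (Fin m) (Fin n) ℝ) (hA : IsSSRp m A ε) :
    ∃ c : Fin m → ℝ,
      IsSSRp m ((Matrix.of fun i => Fin.cons (c i) (A i)) : Matrix (Fin m) (Fin (n + 1)) ℝ) ε := by
  classical
  set B : ℝ → Matrix (Fin m) (Fin (n + 1)) ℝ :=
    fun t => (Matrix.of fun i => Fin.cons (∑ j : Fin n, (-t) ^ (j : ℕ) * A i j) (A i)) with hB
  suffices hEv : ∀ᶠ t in nhdsWithin (0 : ℝ) (Set.Ioi 0), IsSSRp m (B t) ε by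
    obtain ⟨t, ht⟩ := hEv.exists
    exact ⟨fun i => ∑ j : Fin n, (-t) ^ (j : ℕ) * A i j, ht⟩
  -- reduce to a per-minor eventually statement
  have main : ∀ (kk : Fin m) (r : Fin (kk.val + 1) → Fin m) (cc : Fin (kk.val + 1) → Fin (n + 1)),
      StrictMono r → StrictMono cc →
      ∀ᶠ t in nhdsWithin (0 : ℝ) (Set.Ioi 0), 0 < ε kk * ((B t).submatrix r cc).det := by
    intro kk r cc hr hc
    by_cases h0 : cc 0 = 0
    · -- the new column is column 0 of the minor
      have hnz : ∀ s : Fin kk.val, cc s.succ ≠ 0 := by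
        intro s
        have : cc 0 < cc s.succ := hc (Fin.succ_pos s)
        rw [h0] at this
        exact this.ne'
      set d : Fin kk.val → Fin n := fun s => (cc s.succ).pred (hnz s) with hd_def
      have hd : StrictMono d := fun a b hab =>
        Fin.pred_lt_pred_iff.2 (hc (Fin.succ_lt_succ_iff.2 hab))
      have hkn : kk.val < n := lt_of_lt_of_le kk.isLt hmn
      -- j0 : least column index of A missed by d
      set T : Finset (Fin n) := Finset.univ.filter (fun j => ∀ s, d s ≠ j) with hT_def
      have hTne : T.Nonempty := by
        by_contra hcon
        rw [Finset.not_nonempty_iff_eq_empty, Finset.filter_eq_empty_iff] at hcon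
        push_neg at hcon
        have hsurj : Function.Surjective d := by
          intro j
          obtain ⟨s, hs⟩ := hcon (Finset.mem_univ j)
          exact ⟨s, hs⟩
        have := Fintype.card_le_of_surjective d hsurj
        simp only [Fintype.card_fin] at this
        omega
      set j0 : Fin n := T.min' hTne with hj0_def
      have hj0T : ∀ s, d s ≠ j0 := by
        have h1 : j0 ∈ T := T.min'_mem hTne
        have h2 := Finset.mem_filter.1 h1
        exact h2.2
      have claim1 : ∀ j : Fin n, j < j0 → ∃ s, d s = j := by
        intro j hj
        by_contra hcon
        push_neg at hcon
        have hjT : j ∈ T := Finset.mem_filter.2 ⟨Finset.mem_univ _, hcon⟩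
        exact absurd (T.min'_le j hjT) (not_le.2 hj)
      have hj0le : (j0 : ℕ) ≤ kk.val := by
        have hsub : Finset.Iio j0 ⊆ Finset.image d Finset.univ := by
          intro j hj
          rw [Finset.mem_Iio] at hj
          obtain ⟨s, hs⟩ := claim1 j hj
          exact Finset.mem_image.2 ⟨s, Finset.mem_univ s, hs⟩
        have h1 := Finset.card_le_card hsub
        rw [Fin.card_Iio] at h1
        have h2 := Finset.card_image_le (s := (Finset.univ : Finset (Fin kk.val))) (f := d)
        simp only [Finset.card_univ, Fintype.card_fin] at h2
        omega
      have claim2 : ∀ u (hu : u < (j0 : ℕ)), d ⟨u, by omega⟩ = ⟨u, by omega⟩ := by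
        intro u
        induction u using Nat.strong_induction_on with
        | _ u ih =>
          intro hu
          obtain ⟨s, hs⟩ := claim1 ⟨u, by omega⟩ (by rw [Fin.lt_def]; exact hu)
          have hdu : (d s : ℕ) = u := congrArg Fin.val hs
          have hle : (s : ℕ) ≤ u :=
            le_trans (strictMono_le_apply hd s) (le_of_eq hdu)
          rcases Nat.lt_or_ge s.val u with hlt | hge
          · exfalso
            have hs2 : d s = (⟨s.val, by omega⟩ : Fin n) := ih s.val hlt (by omega)
            have hv2 : (d s : ℕ) = s.val := congrArg Fin.val hs2
            omega
          · have hsu : s = (⟨u, by omega⟩ : Fin kk.val) := Fin.ext (by omega)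
            rw [hsu] at hs
            exact hs
      have claim3 : ∀ s : Fin kk.val, (j0 : ℕ) ≤ s.val → j0 < d s := by
        intro s hs
        have hle := strictMono_le_apply hd s
        rw [Fin.lt_def]
        rcases Nat.lt_or_ge (j0 : ℕ) (d s : ℕ) with h | h
        · exact h
        · exfalso
          have : (d s : ℕ) = (j0 : ℕ) := by omega
          exact hj0T s (Fin.ext this)
      set i0 : Fin (kk.val + 1) := ⟨(j0 : ℕ), by omega⟩ with hi0_def
      -- the sorted column list with j0 inserted
      set e : Fin (kk.val + 1) → Fin n := fun s =>
        if h : s.val ≤ (j0 : ℕ) then ⟨s.val, by omega⟩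
        else d ⟨s.val - 1, by omega⟩ with he_def
      have he : StrictMono e := by
        intro a b hab
        rw [Fin.lt_def] at hab
        simp only [he_def]
        by_cases hb : b.val ≤ (j0 : ℕ)
        · rw [dif_pos (le_trans (le_of_lt hab) hb), dif_pos hb]
          exact hab
        · rw [dif_neg hb]
          by_cases ha : a.val ≤ (j0 : ℕ)
          · rw [dif_pos ha]
            have h3 := claim3 ⟨b.val - 1, by omega⟩ (by simp; omega)
            rw [Fin.lt_def] at h3 ⊢
            simp only at h3 ⊢
            omega
          · rw [dif_neg ha]
            exact hd (by rw [Fin.lt_def]; simp; omega)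
      have hcomp : (Fin.cons j0 d : Fin (kk.val + 1) → Fin n) ∘ (i0.cycleRange) = e := by
        funext s
        rcases lt_trichotomy s i0 with hlt | heq | hgt
        · have hv : s.val < (j0 : ℕ) := hlt
          rw [Function.comp_apply, Fin.cycleRange_of_lt hlt]
          have hsucc : s + 1 = Fin.succ (⟨s.val, by omega⟩ : Fin kk.val) := by
            apply Fin.ext
            rw [Fin.val_add_one_of_lt]
            · rfl
            · rw [Fin.lt_def]; simp; omega
          rw [hsucc, Fin.cons_succ, claim2 s.val hv]
          simp only [he_def]
          rw [dif_pos (le_of_lt hv)]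
        · rw [Function.comp_apply, heq, Fin.cycleRange_self, Fin.cons_zero]
          simp only [he_def, hi0_def]
          rw [dif_pos (le_refl _)]
        · have hv : (j0 : ℕ) < s.val := hgt
          rw [Function.comp_apply, Fin.cycleRange_of_gt hgt]
          have hsucc : s = Fin.succ (⟨s.val - 1, by omega⟩ : Fin kk.val) := by
            apply Fin.ext
            simp [Fin.val_succ]
            omega
          simp only [he_def]
          rw [dif_neg (by simp; omega)]
          conv_lhs => rw [hsucc]
          rw [Fin.cons_succ]
      -- minor on the sorted columns `e`
      have hmin_e := hA kk r e hr he
      set σ : Equiv.Perm (Fin (kk.val + 1)) := (i0.cycleRange)⁻¹ with hσ_def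
      have hcons_eq : (Fin.cons j0 d : Fin (kk.val + 1) → Fin n) = e ∘ σ := by
        funext s
        have h1 := congrFun hcomp (σ s)
        simp only [Function.comp_apply] at h1 ⊢
        rw [hσ_def] at h1
        rw [← h1, Equiv.Perm.inv_def, Equiv.apply_symm_apply]
      set D : Fin n → ℝ := fun j => (A.submatrix r (Fin.cons j d)).det with hD_def
      have hDzero : ∀ j : Fin n, (∃ s, d s = j) → D j = 0 := by
        rintro j ⟨s, hs⟩
        apply Matrix.det_zero_of_column_eq (i := (0 : Fin (kk.val + 1))) (j := s.succ)
          (Fin.succ_ne_zero s).symm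
        intro k
        simp [Matrix.submatrix_apply, Fin.cons_zero, Fin.cons_succ, hs]
      have hDj0 : D j0 = (-1 : ℝ) ^ (j0 : ℕ) * (A.submatrix r e).det := by
        have h1 : A.submatrix r (Fin.cons j0 d) = (A.submatrix r e).submatrix id ⇑σ := by
          rw [Matrix.submatrix_submatrix]
          rw [Function.comp_id]
          rw [← hcons_eq]
        have hsign : Equiv.Perm.sign σ = (-1 : ℤˣ) ^ (j0 : ℕ) := by
          rw [hσ_def, Equiv.Perm.sign_inv, Fin.sign_cycleRange]
        rw [hD_def]
        simp only
        rw [h1, Matrix.det_permute', hsign]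
        push_cast
        ring
      set N : Matrix (Fin (kk.val + 1)) (Fin (kk.val + 1)) ℝ :=
        A.submatrix r (Fin.cons j0 d) with hN_def
      have hMt : ∀ t : ℝ, (B t).submatrix r cc
          = N.updateCol 0 (fun i => ∑ j : Fin n, (-t) ^ (j : ℕ) * A (r i) j) := by
        intro t
        ext i s
        refine Fin.cases ?_ ?_ s
        · simp [Matrix.submatrix_apply, Matrix.updateCol_apply, h0, hB]
        · intro u
          have hcu : cc u.succ = (d u).succ := (Fin.succ_pred _ _).symm
          simp [Matrix.submatrix_apply, Matrix.updateCol_apply, Fin.succ_ne_zero,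
            hB, Fin.cons_succ, hcu, hN_def]
      have hDet : ∀ t : ℝ, ((B t).submatrix r cc).det
          = ∑ j : Fin n, (-t) ^ (j : ℕ) * D j := by
        intro t
        rw [hMt t, detColSum N 0 Finset.univ (fun (j : Fin n) i => (-t) ^ (j : ℕ) * A (r i) j)]
        refine Finset.sum_congr rfl fun j _ => ?_
        have h1 : (fun i => (-t) ^ (j : ℕ) * A (r i) j)
            = (-t) ^ (j : ℕ) • (fun i => A (r i) j) := by
          funext i; simp [smul_eq_mul]
        rw [h1, Matrix.det_updateCol_smul]
        congr 1
        rw [hD_def]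
        simp only
        congr 1
        ext i s
        refine Fin.cases ?_ ?_ s
        · simp [Matrix.updateCol_apply, Matrix.submatrix_apply, Fin.cons_zero]
        · intro u
          simp [Matrix.updateCol_apply, Fin.succ_ne_zero, Matrix.submatrix_apply,
            Fin.cons_succ, hN_def]
      set g : ℝ → ℝ := fun t =>
        ∑ j : Fin n, (-1 : ℝ) ^ (j : ℕ) * t ^ ((j : ℕ) - (j0 : ℕ)) * (ε kk * D j) with hg_def
      have hgc : Continuous g := by
        rw [hg_def]
        exact continuous_finset_sum _ fun j _ =>
          (continuous_const.mul (continuous_pow _)).mul continuous_const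
      have hg0 : g 0 = ε kk * (A.submatrix r e).det := by
        rw [hg_def]
        simp only
        rw [Finset.sum_eq_single j0]
        · rw [Nat.sub_self, pow_zero, mul_one, hDj0]
          have hsq : ((-1 : ℝ)) ^ (j0 : ℕ) * ((-1 : ℝ)) ^ (j0 : ℕ) = 1 := by
            rw [← pow_add]; exact Even.neg_one_pow ⟨(j0 : ℕ), rfl⟩
          linear_combination (ε kk * (A.submatrix r e).det) * hsq
        · intro j _ hj
          rcases lt_or_gt_of_ne hj with hlt | hgt
          · rw [hDzero j (claim1 j hlt)]; ring
          · have hgt' : (j0 : ℕ) < (j : ℕ) := hgt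
            rw [zero_pow (by omega : (j : ℕ) - (j0 : ℕ) ≠ 0)]; ring
        · intro h; exact absurd (Finset.mem_univ j0) h
      have hposg : ∀ᶠ t in nhds (0 : ℝ), 0 < g t := by
        have h1 : (0 : ℝ) < g 0 := by rw [hg0]; exact hmin_e
        exact (hgc.tendsto 0).eventually (eventually_gt_nhds h1)
      filter_upwards [eventually_nhdsWithin_of_eventually_nhds hposg,
        self_mem_nhdsWithin] with t hgt ht
      have htpos : (0 : ℝ) < t := ht
      have hterm : ∀ j ∈ (Finset.univ : Finset (Fin n)),
          ε kk * ((-t) ^ (j : ℕ) * D j)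
          = t ^ (j0 : ℕ) * ((-1 : ℝ) ^ (j : ℕ) * t ^ ((j : ℕ) - (j0 : ℕ)) * (ε kk * D j)) := by
        intro j _
        by_cases hj : ∃ s, d s = j
        · rw [hDzero j hj]; ring
        · push_neg at hj
          have hjT : j ∈ T := Finset.mem_filter.2 ⟨Finset.mem_univ _, hj⟩
          have hjge : (j0 : ℕ) ≤ (j : ℕ) := T.min'_le j hjT
          have ht2 : t ^ (j : ℕ) = t ^ (j0 : ℕ) * t ^ ((j : ℕ) - (j0 : ℕ)) := by
            rw [← pow_add]; congr 1; omega
          rw [neg_pow, ht2]; ring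
      have hkey : ε kk * ((B t).submatrix r cc).det = t ^ (j0 : ℕ) * g t := by
        rw [hDet t, Finset.mul_sum, hg_def]
        simp only
        rw [Finset.mul_sum]
        exact Finset.sum_congr rfl hterm
      rw [hkey]
      exact mul_pos (pow_pos htpos _) hgt
    · -- the new column is not involved: the minor is a minor of `A`
      have hne : ∀ s, cc s ≠ 0 := by
        intro s
        have h1 : (0 : Fin (n + 1)) < cc 0 := Fin.pos_iff_ne_zero.2 h0
        exact (lt_of_lt_of_le h1 (hc.monotone (Fin.zero_le s))).ne'
      set c2 : Fin (kk.val + 1) → Fin n := fun s => (cc s).pred (hne s) with hc2def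
      have hc2 : StrictMono c2 := fun a b hab => Fin.pred_lt_pred_iff.2 (hc hab)
      have hsub : ∀ t, (B t).submatrix r cc = A.submatrix r c2 := by
        intro t
        ext i s
        have : cc s = (c2 s).succ := (Fin.succ_pred _ _).symm
        simp only [Matrix.submatrix_apply, hB, Matrix.of_apply, this, Fin.cons_succ]
      exact Filter.Eventually.of_forall fun t => by
        rw [hsub t]; exact hA kk r c2 hr hc2
  have : ∀ᶠ t in nhdsWithin (0 : ℝ) (Set.Ioi 0),
      ∀ i : (kk : Fin m) × ((Fin (kk.val + 1) → Fin m) × (Fin (kk.val + 1) → Fin (n + 1))),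
        StrictMono i.2.1 → StrictMono i.2.2 → 0 < ε i.1 * ((B t).submatrix i.2.1 i.2.2).det := by
    rw [Filter.eventually_all]
    rintro ⟨kk, r, cc⟩
    by_cases hr : StrictMono r
    · by_cases hc : StrictMono cc
      · exact (main kk r cc hr hc).mono fun t h _ _ => h
      · exact Filter.Eventually.of_forall fun t _ h2 => absurd h2 hc
    · exact Filter.Eventually.of_forall fun t h1 _ => absurd h1 hr
  exact this.mono fun t h kk r cc hr hc => h ⟨kk, r, cc⟩ hr hc
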